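/- arXiv:1804.09411 — 7 statements merged into one kernel-verified Lean document; each statement's English description precedes it below -/
import Mathlib

section
/- (Bounding-disk lemma.) In any stable-matching Voronoi diagram, the set of matched points equals the union of the bounding disks of all the sites: ⋃_{s ∈ S} C(s) = ⋃_{s ∈ S} closedBall(s, r(s)). -/
open MeasureTheory Metric

theorem matched_eq_union_bounding_disks
    (S : Finset (EuclideanSpace ℝ (Fin 2)))
    (A : EuclideanSpace ℝ (Fin 2) → ℝ)
    (C : EuclideanSpace ℝ (Fin 2) → Set (EuclideanSpace ℝ (Fin 2)))
    (r : EuclideanSpace ℝ (Fin 2) → ℝ)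
    (hr : ∀ s, r s = sSup ((fun q => dist q s) '' C s))
    (hA : ∀ s ∈ S, 0 < A s)
    (hclosed : ∀ s ∈ S, IsClosed (C s))
    (hbdd : ∀ s ∈ S, Bornology.IsBounded (C s))
    (hvol : ∀ s ∈ S, volume (C s) = ENNReal.ofReal (A s))
    (hint : ∀ s ∈ S, ∀ t ∈ S, s ≠ t → interior (C s) ∩ interior (C t) = ∅)
    (hstable : ¬ ∃ s ∈ S, ∃ p : EuclideanSpace ℝ (Fin 2),
      p ∉ C s ∧ dist p s < r s ∧
      ((∀ t ∈ S, p ∉ C t) ∨ ∃ t ∈ S, p ∈ C t ∧ dist p s < dist p t))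
    :
    (⋃ s ∈ S, C s) = ⋃ s ∈ S, closedBall s (r s) := by
  push_neg at hstable
  -- distances within a cell are at most the bounding radius
  have hle : ∀ s ∈ S, ∀ q ∈ C s, dist q s ≤ r s := by
    intro s hs q hq
    rw [hr s]
    obtain ⟨R, hR⟩ := (hbdd s hs).subset_closedBall s
    apply le_csSup
    · exact ⟨R, by rintro x ⟨y, hy, rfl⟩; exact hR hy⟩
    · exact ⟨q, hq, rfl⟩
  -- each radius is positive
  have hrpos : ∀ s ∈ S, 0 < r s := by
    intro s hs
    by_contra h
    push_neg at h
    have hsub : C s ⊆ {s} := by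
      intro q hq
      have := (hle s hs q hq).trans h
      have : dist q s = 0 := le_antisymm this dist_nonneg
      simpa [dist_eq_zero] using this
    have hv : volume (C s) ≤ volume ({s} : Set (EuclideanSpace ℝ (Fin 2))) :=
      measure_mono hsub
    rw [hvol s hs, measure_singleton] at hv
    exact absurd (le_antisymm hv zero_le)
      (by simp [ENNReal.ofReal_eq_zero, not_le, hA s hs])
  -- the union of cells is closed
  have hUclosed : IsClosed (⋃ s ∈ S, C s) :=
    S.finite_toSet.isClosed_biUnion (fun s hs => hclosed s hs)
  -- open ball is contained in the union of cells
  have hball : ∀ s ∈ S, ball s (r s) ⊆ ⋃ t ∈ S, C t := by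
    intro s hs q hq
    rw [mem_ball] at hq
    by_cases hqC : q ∈ C s
    · exact Set.mem_biUnion hs hqC
    · have h := hstable s hs q hqC hq
      obtain ⟨⟨t, ht, hqt⟩, _⟩ := h
      exact Set.mem_biUnion ht hqt
  apply Set.Subset.antisymm
  · intro p hp
    obtain ⟨s, hs, hps⟩ := Set.mem_iUnion₂.mp hp
    exact Set.mem_biUnion hs (mem_closedBall.mpr (hle s hs p hps))
  · intro p hp
    obtain ⟨s, hs, hps⟩ := Set.mem_iUnion₂.mp hp
    have : p ∈ closure (ball s (r s)) := by
      rw [closure_ball s (ne_of_gt (hrpos s hs))]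
      exact hps
    have := closure_mono (hball s hs) this
    rwa [hUclosed.closure_eq] at this
end

section
/- (Radius-monotonicity lemma.) In any stable-matching Voronoi diagram, let s and s' be distinct sites with r(s) ≤ r(s'). Then every point p ∈ C(s) with p ∉ C(s') satisfies dist(p, s) ≤ dist(p, s'). -/
open MeasureTheory Metric

theorem radius_monotonicity
    (S : Finset (EuclideanSpace ℝ (Fin 2)))
    (A : EuclideanSpace ℝ (Fin 2) → ℝ)
    (C : EuclideanSpace ℝ (Fin 2) → Set (EuclideanSpace ℝ (Fin 2)))
    (r : EuclideanSpace ℝ (Fin 2) → ℝ)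
    (hr : ∀ s, r s = sSup ((fun q => dist q s) '' C s))
    (hA : ∀ s ∈ S, 0 < A s)
    (hclosed : ∀ s ∈ S, IsClosed (C s))
    (hbdd : ∀ s ∈ S, Bornology.IsBounded (C s))
    (hvol : ∀ s ∈ S, volume (C s) = ENNReal.ofReal (A s))
    (hint : ∀ s ∈ S, ∀ t ∈ S, s ≠ t → interior (C s) ∩ interior (C t) = ∅)
    (hstable : ¬ ∃ s ∈ S, ∃ p : EuclideanSpace ℝ (Fin 2),
      p ∉ C s ∧ dist p s < r s ∧
      ((∀ t ∈ S, p ∉ C t) ∨ ∃ t ∈ S, p ∈ C t ∧ dist p s < dist p t))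
    (s s' : EuclideanSpace ℝ (Fin 2)) (hs : s ∈ S) (hs' : s' ∈ S) (hne : s ≠ s')
    (hrle : r s ≤ r s')
    (p : EuclideanSpace ℝ (Fin 2)) (hpC : p ∈ C s) (hpNot : p ∉ C s') :
    dist p s ≤ dist p s' := by
  by_contra h
  push_neg at h
  have hps : dist p s ≤ r s := by
    rw [hr s]
    exact le_csSup (((LipschitzWith.dist_left s).isBounded_image (hbdd s hs)).bddAbove) ⟨p, hpC, rfl⟩
  exact hstable ⟨s', hs', p, hpNot, lt_of_lt_of_le h (hps.trans hrle),
    Or.inr ⟨s, hs, hpC, h⟩⟩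
end

section
/- (Corollary: cells lie in Voronoi cells of the remaining sites.) In any stable-matching Voronoi diagram, enumerate the sites as s₁, …, sₙ with nondecreasing bounding radii, i.e., r(s₁) ≤ r(s₂) ≤ … ≤ r(sₙ). Then for every index i and every point p ∈ C(sᵢ) that does not belong to any cell C(s_j) with j > i, one has dist(p, sᵢ) ≤ dist(p, s_j) for every j > i; in other words, such a point lies in the standard Voronoi cell of sᵢ with respect to the site set {sᵢ, …, sₙ}. -/
open MeasureTheory Metric

theorem cell_subset_voronoi_of_rest
    (S : Finset (EuclideanSpace ℝ (Fin 2)))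
    (A : EuclideanSpace ℝ (Fin 2) → ℝ)
    (C : EuclideanSpace ℝ (Fin 2) → Set (EuclideanSpace ℝ (Fin 2)))
    (r : EuclideanSpace ℝ (Fin 2) → ℝ)
    (hr : ∀ s, r s = sSup ((fun q => dist q s) '' C s))
    (hA : ∀ s ∈ S, 0 < A s)
    (hclosed : ∀ s ∈ S, IsClosed (C s))
    (hbdd : ∀ s ∈ S, Bornology.IsBounded (C s))
    (hvol : ∀ s ∈ S, volume (C s) = ENNReal.ofReal (A s))
    (hint : ∀ s ∈ S, ∀ t ∈ S, s ≠ t → interior (C s) ∩ interior (C t) = ∅)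
    (hstable : ¬ ∃ s ∈ S, ∃ p : EuclideanSpace ℝ (Fin 2),
      p ∉ C s ∧ dist p s < r s ∧
      ((∀ t ∈ S, p ∉ C t) ∨ ∃ t ∈ S, p ∈ C t ∧ dist p s < dist p t))
    (n : ℕ) (sites : Fin n → EuclideanSpace ℝ (Fin 2))
    (hinj : Function.Injective sites)
    (himg : (S : Set (EuclideanSpace ℝ (Fin 2))) = Set.range sites)
    (hmono : ∀ i j : Fin n, i ≤ j → r (sites i) ≤ r (sites j)) :
    ∀ i : Fin n, ∀ p ∈ C (sites i),
      (∀ j : Fin n, i < j → p ∉ C (sites j)) →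
      ∀ j : Fin n, i < j → dist p (sites i) ≤ dist p (sites j) := by
  intro i p hp hnot j hij
  have hiS : sites i ∈ S := by
    rw [← Finset.mem_coe, himg]; exact ⟨i, rfl⟩
  have hjS : sites j ∈ S := by
    rw [← Finset.mem_coe, himg]; exact ⟨j, rfl⟩
  by_contra h
  push_neg at h
  have hle : dist p (sites i) ≤ r (sites i) := by
    rw [hr]
    obtain ⟨R, hR⟩ := (hbdd _ hiS).subset_closedBall (sites i)
    refine le_csSup ⟨R, ?_⟩ ⟨p, hp, rfl⟩
    rintro x ⟨q, hq, rfl⟩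
    exact mem_closedBall.mp (hR hq)
  exact hstable ⟨sites j, hjS, p, hnot j hij,
    h.trans_le (hle.trans (hmono i j hij.le)), Or.inr ⟨sites i, hiS, hp, h⟩⟩
end

section
/- (Pointwise core of the incremental-construction correctness lemma.) In any stable-matching Voronoi diagram, enumerate the sites as s₁, …, sₙ with nondecreasing bounding radii, i.e., r(s₁) ≤ … ≤ r(sₙ). Fix an index i and a site s ∈ {sᵢ, …, sₙ}. Suppose a point p ∈ ℝ² satisfies: (a) dist(p, s_j) > r(s_j) for every j < i (p lies outside the bounding disks of all earlier sites); (b) dist(p, sᵢ) < r(sᵢ) (p lies strictly inside the bounding disk of sᵢ); and (c) dist(p, s) < dist(p, s_j) for every j ≥ i with s_j ≠ s (s is the strictly nearest site to p among sᵢ, …, sₙ). Then p ∈ C(s). -/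
open MeasureTheory Metric

theorem incremental_pointwise_core
    (S : Finset (EuclideanSpace ℝ (Fin 2)))
    (A : EuclideanSpace ℝ (Fin 2) → ℝ)
    (C : EuclideanSpace ℝ (Fin 2) → Set (EuclideanSpace ℝ (Fin 2)))
    (r : EuclideanSpace ℝ (Fin 2) → ℝ)
    (hr : ∀ s, r s = sSup ((fun q => dist q s) '' C s))
    (hA : ∀ s ∈ S, 0 < A s)
    (hclosed : ∀ s ∈ S, IsClosed (C s))
    (hbdd : ∀ s ∈ S, Bornology.IsBounded (C s))
    (hvol : ∀ s ∈ S, volume (C s) = ENNReal.ofReal (A s))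
    (hint : ∀ s ∈ S, ∀ t ∈ S, s ≠ t → interior (C s) ∩ interior (C t) = ∅)
    (hstable : ¬ ∃ s ∈ S, ∃ p : EuclideanSpace ℝ (Fin 2),
      p ∉ C s ∧ dist p s < r s ∧
      ((∀ t ∈ S, p ∉ C t) ∨ ∃ t ∈ S, p ∈ C t ∧ dist p s < dist p t))
    (n : ℕ) (sites : Fin n → EuclideanSpace ℝ (Fin 2))
    (hinj : Function.Injective sites)
    (himg : (S : Set (EuclideanSpace ℝ (Fin 2))) = Set.range sites)
    (hmono : ∀ i j : Fin n, i ≤ j → r (sites i) ≤ r (sites j))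
    (i k : Fin n) (hik : i ≤ k)
    (p : EuclideanSpace ℝ (Fin 2))
    (ha : ∀ j : Fin n, j < i → r (sites j) < dist p (sites j))
    (hb : dist p (sites i) < r (sites i))
    (hc : ∀ j : Fin n, i ≤ j → sites j ≠ sites k → dist p (sites k) < dist p (sites j)) :
    p ∈ C (sites k) := by
  by_contra hp
  -- key: dist p (sites k) < r (sites k)
  have hskS : sites k ∈ S := by
    have : sites k ∈ Set.range sites := ⟨k, rfl⟩
    rwa [← himg] at this
  have hdk : dist p (sites k) < r (sites k) := by
    by_cases hki : sites k = sites i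
    · rw [hki]; exact hb
    · have := hc i le_rfl (fun h => hki h.symm)
      exact lt_of_lt_of_le (lt_trans this hb) (hmono i k hik)
  -- membership bound: q ∈ C t (t ∈ S) → dist q t ≤ r t
  have hmem : ∀ t ∈ S, ∀ q ∈ C t, dist q t ≤ r t := by
    intro t ht q hq
    rw [hr]
    obtain ⟨R, hR⟩ := (hbdd t ht).subset_closedBall t
    apply le_csSup
    · exact ⟨R, fun x ⟨y, hy, hxy⟩ => hxy ▸ mem_closedBall.mp (hR hy)⟩
    · exact ⟨q, hq, rfl⟩
  apply hstable
  refine ⟨sites k, hskS, p, hp, hdk, ?_⟩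
  by_cases hmatch : ∀ t ∈ S, p ∉ C t
  · exact Or.inl hmatch
  · push_neg at hmatch
    obtain ⟨t, htS, hpt⟩ := hmatch
    obtain ⟨j, rfl⟩ : ∃ j, sites j = t := by
      have : t ∈ Set.range sites := himg ▸ htS
      exact this
    rcases lt_or_ge j i with hji | hij
    · exact absurd (hmem _ htS p hpt) (not_le.mpr (ha j hji))
    · have hne : sites j ≠ sites k := by
        intro h; exact hp (h ▸ hpt)
      exact Or.inr ⟨sites j, htS, hpt, hc j hij hne⟩
end

section
/- (Isolated sites have disk-shaped cells.) In any stable-matching Voronoi diagram, let s be a site, set ρ := √(A(s)/π), and suppose dist(s, t) > 2ρ for every other site t ≠ s. Then the open ball ball(s, ρ) is contained in C(s), and consequently volume(C(s) \ closedBall(s, ρ)) = 0; that is, up to a null set the cell of s is exactly the disk of area A(s) centered at s. -/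
open MeasureTheory Metric

lemma vol_ball_two (x : EuclideanSpace ℝ (Fin 2)) (ρ : ℝ) (hρ : 0 ≤ ρ) :
    volume (ball x ρ) = ENNReal.ofReal (Real.pi * ρ ^ 2) := by
  rw [EuclideanSpace.volume_ball, Fintype.card_fin,
    show ((2:ℕ):ℝ)/2 + 1 = 2 by push_cast; norm_num, Real.Gamma_two,
    Real.sq_sqrt Real.pi_pos.le, div_one, ← ENNReal.ofReal_pow hρ,
    ← ENNReal.ofReal_mul (by positivity)]
  ring_nf

lemma vol_closedBall_two (x : EuclideanSpace ℝ (Fin 2)) (ρ : ℝ) (hρ : 0 ≤ ρ) :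
    volume (closedBall x ρ) = ENNReal.ofReal (Real.pi * ρ ^ 2) := by
  rw [Measure.addHaar_closedBall_eq_addHaar_ball, vol_ball_two x ρ hρ]

theorem isolated_site_disk_cell
    (S : Finset (EuclideanSpace ℝ (Fin 2)))
    (A : EuclideanSpace ℝ (Fin 2) → ℝ)
    (C : EuclideanSpace ℝ (Fin 2) → Set (EuclideanSpace ℝ (Fin 2)))
    (r : EuclideanSpace ℝ (Fin 2) → ℝ)
    (hr : ∀ s, r s = sSup ((fun q => dist q s) '' C s))
    (hA : ∀ s ∈ S, 0 < A s)
    (hclosed : ∀ s ∈ S, IsClosed (C s))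
    (hbdd : ∀ s ∈ S, Bornology.IsBounded (C s))
    (hvol : ∀ s ∈ S, volume (C s) = ENNReal.ofReal (A s))
    (hint : ∀ s ∈ S, ∀ t ∈ S, s ≠ t → interior (C s) ∩ interior (C t) = ∅)
    (hstable : ¬ ∃ s ∈ S, ∃ p : EuclideanSpace ℝ (Fin 2),
      p ∉ C s ∧ dist p s < r s ∧
      ((∀ t ∈ S, p ∉ C t) ∨ ∃ t ∈ S, p ∈ C t ∧ dist p s < dist p t))
    (s : EuclideanSpace ℝ (Fin 2)) (hs : s ∈ S)
    (hsep : ∀ t ∈ S, t ≠ s → 2 * Real.sqrt (A s / Real.pi) < dist s t) :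
    ball s (Real.sqrt (A s / Real.pi)) ⊆ C s ∧
      volume (C s \ closedBall s (Real.sqrt (A s / Real.pi))) = 0 := by
  set ρ := Real.sqrt (A s / Real.pi) with hρdef
  have hρ0 : 0 ≤ ρ := Real.sqrt_nonneg _
  have hAs : 0 < A s := hA s hs
  have hρ2 : Real.pi * ρ ^ 2 = A s := by
    rw [hρdef, Real.sq_sqrt (by positivity)]
    field_simp
  -- C s is nonempty
  have hCne : (C s).Nonempty := by
    rw [Set.nonempty_iff_ne_empty]
    intro h
    have hv := hvol s hs
    rw [h, measure_empty] at hv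
    exact absurd hv.symm (ne_of_gt (ENNReal.ofReal_pos.mpr hAs))
  -- C s ⊆ closedBall s (r s)
  obtain ⟨M, hM⟩ := (hbdd s hs).subset_closedBall s
  have hub : ∀ q ∈ C s, dist q s ≤ r s := by
    intro q hq
    rw [hr s]
    exact le_csSup ⟨M, by rintro _ ⟨x, hx, rfl⟩; simpa [dist_comm] using hM hx⟩
      ⟨q, hq, rfl⟩
  have hrs0 : 0 ≤ r s := le_trans dist_nonneg (hub _ hCne.choose_spec)
  -- ρ ≤ r s
  have hρr : ρ ≤ r s := by
    have hsub : C s ⊆ closedBall s (r s) := fun q hq => mem_closedBall.mpr (hub q hq)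
    have hle : ENNReal.ofReal (A s) ≤ ENNReal.ofReal (Real.pi * (r s) ^ 2) := by
      rw [← hvol s hs, ← vol_closedBall_two s (r s) hrs0]
      exact measure_mono hsub
    have hle' : A s ≤ Real.pi * (r s) ^ 2 :=
      (ENNReal.ofReal_le_ofReal_iff (by positivity)).mp hle
    have : A s / Real.pi ≤ (r s) ^ 2 := by
      rw [div_le_iff₀ Real.pi_pos]; linarith [hle']
    calc ρ ≤ Real.sqrt ((r s) ^ 2) := Real.sqrt_le_sqrt this
      _ = r s := Real.sqrt_sq hrs0
  -- ball ⊆ C s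
  have hball : ball s ρ ⊆ C s := by
    intro p hp
    by_contra hpC
    rw [mem_ball] at hp
    apply hstable
    refine ⟨s, hs, p, hpC, lt_of_lt_of_le hp hρr, ?_⟩
    by_cases hcase : ∃ t ∈ S, p ∈ C t
    · obtain ⟨t, htS, hpt⟩ := hcase
      have hts : t ≠ s := fun h => hpC (h ▸ hpt)
      right
      refine ⟨t, htS, hpt, ?_⟩
      have h1 : 2 * ρ < dist s t := hsep t htS hts
      have h2 : dist s t ≤ dist s p + dist p t := dist_triangle s p t
      have h3 : dist s p < ρ := by rwa [dist_comm]
      linarith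
    · left
      push_neg at hcase
      exact hcase
  refine ⟨hball, ?_⟩
  -- null set part
  have hmeas : MeasurableSet (C s) := (hclosed s hs).measurableSet
  have key : volume (C s ∩ closedBall s ρ) + volume (C s \ closedBall s ρ) = volume (C s) :=
    measure_inter_add_diff (C s) measurableSet_closedBall
  have hge : ENNReal.ofReal (A s) ≤ volume (C s ∩ closedBall s ρ) := by
    rw [← hρ2, ← vol_ball_two s ρ hρ0]
    exact measure_mono (Set.subset_inter hball ball_subset_closedBall)
  have hCvol : volume (C s) = ENNReal.ofReal (A s) := hvol s hs
  have hfin : volume (C s ∩ closedBall s ρ) ≠ ⊤ := by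
    intro h
    rw [h] at key
    simp [hCvol] at key
  have : volume (C s \ closedBall s ρ) =
      volume (C s) - volume (C s ∩ closedBall s ρ) := by
    rw [← key, ENNReal.add_sub_cancel_left hfin]
  rw [this, hCvol, tsub_eq_zero_of_le hge]
end

section
/- (Average-degree lemma.) Let G be a finite simple graph in which every vertex has degree 2 or degree 3, and in which no vertex of degree 2 has two distinct neighbors of degree 2. Then the average degree of G is at least 2.25; equivalently, 4·(∑_{v} deg(v)) ≥ 9·(number of vertices of G). In particular, the number of degree-3 vertices is at least one third of the number of degree-2 vertices. -/
theorem average_degree_lemma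
    {V : Type*} [Fintype V] (G : SimpleGraph V) [DecidableRel G.Adj]
    (hdeg : ∀ v : V, G.degree v = 2 ∨ G.degree v = 3)
    (hno : ¬ ∃ v u w : V, G.degree v = 2 ∧ G.Adj v u ∧ G.Adj v w ∧ u ≠ w ∧
      G.degree u = 2 ∧ G.degree w = 2) :
    4 * (∑ v : V, G.degree v) ≥ 9 * Fintype.card V ∧
      3 * (Finset.univ.filter fun v : V => G.degree v = 3).card ≥
        (Finset.univ.filter fun v : V => G.degree v = 2).card := by
  classical
  set A := Finset.univ.filter fun v : V => G.degree v = 2 with hA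
  set B := Finset.univ.filter fun v : V => G.degree v = 3 with hB
  -- every degree-2 vertex has a degree-3 neighbor
  have hnbr : ∀ a ∈ A, ∃ b, G.Adj a b ∧ G.degree b = 3 := by
    intro a ha
    rw [hA, Finset.mem_filter] at ha
    by_contra h
    push_neg at h
    have hcard : (G.neighborFinset a).card = 2 := by
      rw [G.card_neighborFinset_eq_degree]; exact ha.2
    obtain ⟨u, hu, w, hw, huw⟩ := Finset.one_lt_card.mp (show 1 < (G.neighborFinset a).card by omega)
    rw [SimpleGraph.mem_neighborFinset] at hu hw
    have hu2 : G.degree u = 2 := (hdeg u).resolve_right (h u hu)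
    have hw2 : G.degree w = 2 := (hdeg w).resolve_right (h w hw)
    exact hno ⟨a, u, w, ha.2, hu, hw, huw, hu2, hw2⟩
  -- double counting: A.card ≤ 3 * B.card
  have hAle : A.card ≤ 3 * B.card := by
    calc A.card = ∑ a ∈ A, 1 := by simp
      _ ≤ ∑ a ∈ A, ∑ b ∈ B, (if G.Adj a b then 1 else 0) := by
          apply Finset.sum_le_sum
          intro a ha
          obtain ⟨b, hab, hb3⟩ := hnbr a ha
          have hbB : b ∈ B := by rw [hB, Finset.mem_filter]; exact ⟨Finset.mem_univ _, hb3⟩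
          calc 1 = (if G.Adj a b then 1 else 0) := by simp [hab]
            _ ≤ ∑ b ∈ B, (if G.Adj a b then 1 else 0) :=
              Finset.single_le_sum (f := fun b => if G.Adj a b then (1:ℕ) else 0) (fun i _ => by positivity) hbB
      _ = ∑ b ∈ B, ∑ a ∈ A, (if G.Adj a b then 1 else 0) := Finset.sum_comm
      _ ≤ ∑ b ∈ B, 3 := by
          apply Finset.sum_le_sum
          intro b hb
          rw [hB, Finset.mem_filter] at hb
          have : ∑ a ∈ A, (if G.Adj a b then 1 else 0) = (A.filter fun a => G.Adj a b).card :=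
            (Finset.card_filter _ _).symm
          rw [this]
          have hsub : (A.filter fun a => G.Adj a b) ⊆ G.neighborFinset b := by
            intro a ha
            rw [Finset.mem_filter] at ha
            rw [SimpleGraph.mem_neighborFinset]
            exact ha.2.symm
          calc (A.filter fun a => G.Adj a b).card ≤ (G.neighborFinset b).card :=
                Finset.card_le_card hsub
            _ = 3 := by rw [G.card_neighborFinset_eq_degree]; exact hb.2
      _ = 3 * B.card := by rw [Finset.sum_const, smul_eq_mul, mul_comm]
  -- card V = A.card + B.card
  have hBeq : B = Finset.univ.filter fun v : V => ¬ G.degree v = 2 := by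
    apply Finset.filter_congr
    intro v _
    rcases hdeg v with h | h <;> simp [h]
  have hcardV : A.card + B.card = Fintype.card V := by
    rw [hBeq, hA]
    rw [Finset.card_filter_add_card_filter_not]
    exact (Finset.card_univ)
  -- sum of degrees
  have hsum : ∑ v : V, G.degree v = 2 * A.card + 3 * B.card := by
    rw [← Finset.sum_filter_add_sum_filter_not Finset.univ (fun v => G.degree v = 2)]
    have h1 : ∑ v ∈ A, G.degree v = 2 * A.card := by
      rw [Finset.sum_congr rfl (fun v hv => (Finset.mem_filter.mp hv).2)]
      rw [Finset.sum_const, smul_eq_mul, mul_comm]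
    have h2 : ∑ v ∈ Finset.univ.filter (fun v => ¬ G.degree v = 2), G.degree v
        = 3 * B.card := by
      rw [← hBeq]
      rw [Finset.sum_congr rfl (fun v hv => (Finset.mem_filter.mp hv).2)]
      rw [Finset.sum_const, smul_eq_mul, mul_comm]
    rw [← hA] at *
    rw [h1]
    rw [hBeq] at h2 ⊢
    rw [h2]
  constructor
  · rw [hsum, ← hcardV]; omega
  · exact hAle
end

section
/- (Annulus–disk intersection lemma.) Fix real numbers ρ and rad with 0 < rad < ρ, and fix a center c ∈ ℝ² with dist(c, 0) = ρ + rad, so that the closed disk D = closedBall(c, rad) is tangent to the circle of radius ρ about the origin and its center lies outside that circle. For ε > 0 let A_ε := {p ∈ ℝ² : ρ ≤ dist(p, 0) ≤ ρ + ε} be the annulus of inner radius ρ and width ε. Then the ratio volume(A_ε ∩ D) / volume(A_ε) tends to 0 as ε tends to 0 from the right (limit along the filter 𝓝[>] 0). -/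
open MeasureTheory Metric Filter

private lemma vol_cball (x : EuclideanSpace ℝ (Fin 2)) (r : ℝ) (hr : 0 ≤ r) :
    volume (closedBall x r) = ENNReal.ofReal (Real.pi * r ^ 2) := by
  rw [EuclideanSpace.volume_closedBall, Fintype.card_fin]
  have h1 : Real.Gamma ((2 : ℕ) / 2 + 1) = 1 := by norm_num
  rw [h1, Real.sq_sqrt Real.pi_nonneg, div_one, ← ENNReal.ofReal_pow hr,
    ← ENNReal.ofReal_mul (by positivity), mul_comm]

private lemma vol_ball (x : EuclideanSpace ℝ (Fin 2)) (r : ℝ) (hr : 0 ≤ r) :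
    volume (ball x r) = ENNReal.ofReal (Real.pi * r ^ 2) := by
  rw [EuclideanSpace.volume_ball, Fintype.card_fin]
  have h1 : Real.Gamma ((2 : ℕ) / 2 + 1) = 1 := by norm_num
  rw [h1, Real.sq_sqrt Real.pi_nonneg, div_one, ← ENNReal.ofReal_pow hr,
    ← ENNReal.ofReal_mul (by positivity), mul_comm]

private lemma box_vol (a b s : ℝ) :
    volume (((MeasurableEquiv.toLp 2 (Fin 2 → ℝ)).symm) ⁻¹'
      (Set.univ.pi ![Set.Icc a b, Set.Icc (-s) s])) =
      ENNReal.ofReal (b - a) * ENNReal.ofReal (s - -s) := by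
  have hm : MeasurableSet (Set.univ.pi ![Set.Icc a b, Set.Icc (-s) s]) := by
    apply MeasurableSet.univ_pi
    intro i
    fin_cases i <;> exact measurableSet_Icc
  rw [(EuclideanSpace.volume_preserving_symm_measurableEquiv_toLp (Fin 2)).measure_preimage
    hm.nullMeasurableSet]
  rw [volume_pi_pi, Fin.prod_univ_two]
  simp [Real.volume_Icc]

private lemma coord_bounds (ρ rad ε : ℝ) (hrad : 0 < rad) (hρ : rad < ρ) (hε : 0 < ε)
    (hεr : ε ≤ rad)
    (b : OrthonormalBasis (Fin 2) ℝ (EuclideanSpace ℝ (Fin 2)))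
    (c : EuclideanSpace ℝ (Fin 2)) (hcb : c = (ρ + rad) • b 0)
    (p : EuclideanSpace ℝ (Fin 2)) (h1 : ρ ≤ dist p 0) (h2 : dist p 0 ≤ ρ + ε)
    (h3 : dist p c ≤ rad) :
    ρ ≤ b.repr p 0 ∧ b.repr p 0 ≤ ρ + ε ∧ (b.repr p 1)^2 ≤ 2 * rad * ε := by
  rw [dist_zero_right] at h1 h2
  set x := b.repr p 0
  set y := b.repr p 1
  have hA : x^2 + y^2 = ‖p‖^2 := by
    rw [← b.repr.norm_map p, EuclideanSpace.norm_eq, Fin.sum_univ_two,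
      Real.sq_sqrt (by positivity)]
    simp [Real.norm_eq_abs, sq_abs]
    rfl
  have hc0 : b.repr c 0 = ρ + rad := by
    rw [hcb, _root_.map_smul, PiLp.smul_apply, OrthonormalBasis.repr_self]
    simp
  have hc1 : b.repr c 1 = 0 := by
    rw [hcb, _root_.map_smul, PiLp.smul_apply, OrthonormalBasis.repr_self]
    simp [EuclideanSpace.single_apply]
  have hB : (x - (ρ + rad))^2 + y^2 ≤ rad^2 := by
    have hd : dist p c = Real.sqrt ((x - (ρ + rad))^2 + y^2) := by
      rw [← b.repr.isometry.dist_eq p c, EuclideanSpace.dist_eq, Fin.sum_univ_two, hc0, hc1,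
        Real.dist_eq, Real.dist_eq, sq_abs, sq_abs, sub_zero]
    rw [hd] at h3
    nlinarith [Real.sq_sqrt (by positivity : (0:ℝ) ≤ (x - (ρ + rad))^2 + y^2),
      Real.sqrt_nonneg ((x - (ρ + rad))^2 + y^2)]
  have hnp : 0 ≤ ‖p‖ := norm_nonneg p
  have hx1 : ρ ≤ x := by nlinarith [sq_nonneg y]
  have hx2 : x ≤ ρ + ε := by nlinarith [sq_nonneg y]
  refine ⟨hx1, hx2, ?_⟩
  nlinarith [mul_nonneg (by linarith : (0:ℝ) ≤ (ρ + rad - x) - (rad - ε))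
    (by linarith : (0:ℝ) ≤ (ρ + rad - x) + (rad - ε))]

theorem annulus_disk_intersection_ratio
    (ρ rad : ℝ) (hrad : 0 < rad) (hρ : rad < ρ)
    (c : EuclideanSpace ℝ (Fin 2)) (hc : dist c 0 = ρ + rad) :
    Tendsto
      (fun ε : ℝ =>
        volume ({p : EuclideanSpace ℝ (Fin 2) | ρ ≤ dist p 0 ∧ dist p 0 ≤ ρ + ε} ∩
            closedBall c rad) /
          volume {p : EuclideanSpace ℝ (Fin 2) | ρ ≤ dist p 0 ∧ dist p 0 ≤ ρ + ε})
      (nhdsWithin 0 (Set.Ioi 0)) (nhds 0) := by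
  have hρ0 : (0:ℝ) < ρ := hrad.trans hρ
  -- orthonormal basis aligned with c
  obtain ⟨b, hcb⟩ : ∃ b : OrthonormalBasis (Fin 2) ℝ (EuclideanSpace ℝ (Fin 2)),
      c = (ρ + rad) • b 0 := by
    have hcn : ‖c‖ = ρ + rad := by rwa [dist_zero_right] at hc
    set u : EuclideanSpace ℝ (Fin 2) := ‖c‖⁻¹ • c with hu_def
    have hun : ‖u‖ = 1 := by
      rw [hu_def, norm_smul, norm_inv, norm_norm, inv_mul_cancel₀ (by rw [hcn]; positivity)]
    have hON : Orthonormal ℝ (Set.restrict {0} ![u, u]) := by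
      refine ⟨fun i => ?_, fun {i j} h => absurd (Subtype.ext (i.2.trans j.2.symm)) h⟩
      have : (i : Fin 2) = 0 := i.2
      simp [Set.restrict, this, hun]
    obtain ⟨b, hb⟩ := hON.exists_orthonormalBasis_extension_of_card_eq (by simp)
    refine ⟨b, ?_⟩
    have h0 : b 0 = u := by simpa using hb 0 rfl
    rw [h0, hu_def, smul_smul, hcn, mul_inv_cancel₀ (by positivity), one_smul]
  set g : ℝ → ENNReal := fun ε => ENNReal.ofReal (Real.sqrt (2 * rad * ε) / (Real.pi * ρ))
    with hg_def
  have hg0 : Tendsto g (nhdsWithin 0 (Set.Ioi 0)) (nhds 0) := by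
    have hcont : Continuous fun ε : ℝ => Real.sqrt (2 * rad * ε) / (Real.pi * ρ) :=
      (Real.continuous_sqrt.comp (by continuity)).div_const _
    have : Tendsto (fun ε : ℝ => Real.sqrt (2 * rad * ε) / (Real.pi * ρ)) (nhds 0)
        (nhds 0) := by
      have := hcont.tendsto 0
      simpa using this
    have h2 := ENNReal.tendsto_ofReal (a := 0)
      (this.mono_left (nhdsWithin_le_nhds (s := Set.Ioi 0)))
    simpa [hg_def] using h2
  refine tendsto_of_tendsto_of_tendsto_of_le_of_le' tendsto_const_nhds hg0
    (Eventually.of_forall fun ε => zero_le) ?_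
  filter_upwards [Ioc_mem_nhdsGT hrad] with ε hε
  obtain ⟨hε0, hεr⟩ := hε
  set A := {p : EuclideanSpace ℝ (Fin 2) | ρ ≤ dist p 0 ∧ dist p 0 ≤ ρ + ε} with hA_def
  set s := Real.sqrt (2 * rad * ε) with hs_def
  have hs0 : 0 ≤ s := Real.sqrt_nonneg _
  have hs_sq : s ^ 2 = 2 * rad * ε := Real.sq_sqrt (by positivity)
  -- upper bound on numerator
  have hnum : volume (A ∩ closedBall c rad) ≤ ENNReal.ofReal ε * ENNReal.ofReal (2 * s) := by
    have hsub : A ∩ closedBall c rad ⊆ ((MeasurableEquiv.toLp 2 (Fin 2 → ℝ)).symm) ∘ b.repr ⁻¹'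
        (Set.univ.pi ![Set.Icc ρ (ρ + ε), Set.Icc (-s) s]) := by
      rintro p ⟨⟨h1, h2⟩, h3⟩
      rw [mem_closedBall] at h3
      obtain ⟨hx1, hx2, hy⟩ := coord_bounds ρ rad ε hrad hρ hε0 hεr b c hcb p h1 h2 h3
      intro i _
      have hy1 : -s ≤ b.repr p 1 := by nlinarith [sq_nonneg (b.repr p 1 + s)]
      have hy2 : b.repr p 1 ≤ s := by nlinarith [sq_nonneg (b.repr p 1 - s)]
      fin_cases i
      · exact ⟨hx1, hx2⟩
      · exact ⟨hy1, hy2⟩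
    calc volume (A ∩ closedBall c rad) ≤ volume (b.repr ⁻¹'
          (((MeasurableEquiv.toLp 2 (Fin 2 → ℝ)).symm) ⁻¹'
            (Set.univ.pi ![Set.Icc ρ (ρ + ε), Set.Icc (-s) s]))) := measure_mono hsub
      _ = ENNReal.ofReal ε * ENNReal.ofReal (2 * s) := by
          have hm : MeasurableSet (Set.univ.pi ![Set.Icc ρ (ρ + ε), Set.Icc (-s) s]) := by
            apply MeasurableSet.univ_pi
            intro i
            fin_cases i <;> exact measurableSet_Icc
          rw [b.measurePreserving_repr.measure_preimage
            (((MeasurableEquiv.toLp 2 (Fin 2 → ℝ)).symm).measurable hm).nullMeasurableSet, box_vol]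
          congr 2 <;> ring
  -- lower bound on denominator
  have hden : ENNReal.ofReal (Real.pi * (2 * ρ * ε)) ≤ volume A := by
    have hAeq : A = closedBall (0 : EuclideanSpace ℝ (Fin 2)) (ρ + ε) \ ball 0 ρ := by
      ext p
      simp only [hA_def, Set.mem_setOf_eq, Set.mem_diff, mem_closedBall, mem_ball, not_lt]
      tauto
    rw [hAeq]
    have h1 := le_measure_diff (μ := volume)
      (s₁ := closedBall (0 : EuclideanSpace ℝ (Fin 2)) (ρ + ε)) (s₂ := ball 0 ρ)
    refine le_trans ?_ h1
    rw [vol_cball _ _ (by linarith), vol_ball _ _ (by linarith),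
      ← ENNReal.ofReal_sub _ (by positivity)]
    apply ENNReal.ofReal_le_ofReal
    nlinarith [mul_nonneg Real.pi_pos.le (sq_nonneg ε)]
  -- combine
  calc volume (A ∩ closedBall c rad) / volume A
      ≤ (ENNReal.ofReal ε * ENNReal.ofReal (2 * s)) /
        ENNReal.ofReal (Real.pi * (2 * ρ * ε)) := ENNReal.div_le_div hnum hden
    _ = g ε := by
        rw [← ENNReal.ofReal_mul hε0.le, hg_def,
          ← ENNReal.ofReal_div_of_pos (by positivity)]
        congr 1
        rw [div_eq_div_iff (by positivity) (by positivity)]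
        ring
end
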